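/- Let K be an infinite field of characteristic p ≥ 5, and let A = F₂^{(3)} = F₂ / T^{(3)}(F₂) be the relatively free algebra of rank 2 with generators x, y. If q₁ = p^{s₁} and q₂ = p^{s₂} with s₁, s₂ ≥ 1, then the special element f(q₁, q₂) = [x, y]·x^{q₁-1}·y^{q₂-1} does NOT belong to the K-linear span of the set of all commutators { [a, b] : a, b ∈ A } (i.e. a special element is not a T-consequence of the commutator). -/

import Mathlib

/-- The right-normed commutator: `rnComm a [b₁, …, b_k] = [a, b₁, …, b_k]`,
where `[u, v] = u * v - v * u`. -/
def rnComm {A : Type*} [Ring A] : A → List A → A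
  | a, [] => a
  | a, b :: l => rnComm (a * b - b * a) l

/-- `Tideal A m` is the two-sided ideal `T⁽ᵐ⁾(A)` of `A` generated by all
right-normed commutators `[a₁, …, a_m]` of length `m`. -/
def Tideal (A : Type*) [Ring A] (m : ℕ) : TwoSidedIdeal A :=
  TwoSidedIdeal.span { x | ∃ (a : A) (l : List A), l.length + 1 = m ∧ rnComm a l = x }

open MvPolynomial

noncomputable section PoissonModel

variable {k : Type*} [CommRing k]

/-- The Poisson bracket `∂₀u ∂₁v - ∂₁u ∂₀v` on `k[X₀,X₁]`. -/
def pbr (u v : MvPolynomial (Fin 2) k) : MvPolynomial (Fin 2) k :=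
  pderiv 0 u * pderiv 1 v - pderiv 1 u * pderiv 0 v

lemma pbr_add_left (u w v : MvPolynomial (Fin 2) k) :
    pbr (u + w) v = pbr u v + pbr w v := by simp [pbr]; ring

lemma pbr_add_right (u v w : MvPolynomial (Fin 2) k) :
    pbr u (v + w) = pbr u v + pbr u w := by simp [pbr]; ring

lemma pbr_zero_left (v : MvPolynomial (Fin 2) k) : pbr 0 v = 0 := by simp [pbr]

lemma pbr_zero_right (v : MvPolynomial (Fin 2) k) : pbr v 0 = 0 := by simp [pbr]

lemma pbr_mul_left (u w v : MvPolynomial (Fin 2) k) :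
    pbr (u * w) v = u * pbr w v + w * pbr u v := by
  simp [pbr, pderiv_mul]; ring

lemma pbr_mul_right (u v w : MvPolynomial (Fin 2) k) :
    pbr u (v * w) = v * pbr u w + w * pbr u v := by
  simp [pbr, pderiv_mul]; ring

@[simp] lemma pbr_one_left (v : MvPolynomial (Fin 2) k) : pbr 1 v = 0 := by simp [pbr]

@[simp] lemma pbr_one_right (v : MvPolynomial (Fin 2) k) : pbr v 1 = 0 := by simp [pbr]

lemma pbr_C_left (a : k) (v : MvPolynomial (Fin 2) k) : pbr (C a) v = 0 := by
  simp [pbr]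

lemma pbr_C_right (a : k) (v : MvPolynomial (Fin 2) k) : pbr v (C a) = 0 := by
  simp [pbr]

/-- The algebra `k[X₀,X₁] ⊕ k[X₀,X₁]t` with `t` central, `t² = 0`, and
`[u, v] = 2{u,v}t`. -/
@[ext]
structure Pois (k : Type*) [CommRing k] where
  fst : MvPolynomial (Fin 2) k
  snd : MvPolynomial (Fin 2) k

namespace Pois

instance : Add (Pois k) := ⟨fun a b => ⟨a.fst + b.fst, a.snd + b.snd⟩⟩
instance : Neg (Pois k) := ⟨fun a => ⟨-a.fst, -a.snd⟩⟩
instance : Zero (Pois k) := ⟨⟨0, 0⟩⟩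
instance : One (Pois k) := ⟨⟨1, 0⟩⟩
instance : Mul (Pois k) :=
  ⟨fun a b => ⟨a.fst * b.fst, a.fst * b.snd + a.snd * b.fst + pbr a.fst b.fst⟩⟩

@[simp] lemma add_fst (a b : Pois k) : (a + b).fst = a.fst + b.fst := rfl
@[simp] lemma add_snd (a b : Pois k) : (a + b).snd = a.snd + b.snd := rfl
@[simp] lemma neg_fst (a : Pois k) : (-a).fst = -a.fst := rfl
@[simp] lemma neg_snd (a : Pois k) : (-a).snd = -a.snd := rfl
@[simp] lemma zero_fst : (0 : Pois k).fst = 0 := rfl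
@[simp] lemma zero_snd : (0 : Pois k).snd = 0 := rfl
@[simp] lemma one_fst : (1 : Pois k).fst = 1 := rfl
@[simp] lemma one_snd : (1 : Pois k).snd = 0 := rfl
@[simp] lemma mul_fst (a b : Pois k) : (a * b).fst = a.fst * b.fst := rfl
@[simp] lemma mul_snd (a b : Pois k) :
    (a * b).snd = a.fst * b.snd + a.snd * b.fst + pbr a.fst b.fst := rfl

instance : AddCommGroup (Pois k) where
  add_assoc a b c := by ext : 1 <;> simp [add_assoc]
  zero_add a := by ext : 1 <;> simp
  add_zero a := by ext : 1 <;> simp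
  add_comm a b := by ext : 1 <;> simp [add_comm]
  neg_add_cancel a := by ext : 1 <;> simp
  nsmul := nsmulRec
  zsmul := zsmulRec

instance : Ring (Pois k) where
  __ := (inferInstance : AddCommGroup (Pois k))
  left_distrib a b c := by
    ext : 1 <;> simp [pbr_add_right] <;> ring
  right_distrib a b c := by
    ext : 1 <;> simp [pbr_add_left] <;> ring
  zero_mul a := by ext : 1 <;> simp [pbr_zero_left]
  mul_zero a := by ext : 1 <;> simp [pbr_zero_right]
  mul_assoc a b c := by
    ext : 1
    · simp [mul_assoc]
    · simp [pbr_mul_left, pbr_mul_right]; ring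
  one_mul a := by ext : 1 <;> simp
  mul_one a := by ext : 1 <;> simp

/-- Scalars embedded in `Pois k`. -/
def PC : k →+* Pois k where
  toFun a := ⟨C a, 0⟩
  map_one' := rfl
  map_mul' a b := by ext : 1 <;> simp [pbr_C_left]
  map_zero' := by ext : 1 <;> simp
  map_add' a b := by ext : 1 <;> simp

instance : Algebra k (Pois k) :=
  RingHom.toAlgebra' PC (by
    intro a x
    change (⟨C a, 0⟩ : Pois k) * x = x * ⟨C a, 0⟩
    ext : 1 <;> simp [PC, pbr_C_left, pbr_C_right, mul_comm])

@[simp] lemma algebraMap_fst (a : k) : (algebraMap k (Pois k) a).fst = C a := rfl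
@[simp] lemma algebraMap_snd (a : k) : (algebraMap k (Pois k) a).snd = 0 := rfl

@[simp] lemma smul_fst (a : k) (x : Pois k) : (a • x).fst = C a * x.fst := by
  rw [Algebra.smul_def]; simp
@[simp] lemma smul_snd (a : k) (x : Pois k) : (a • x).snd = C a * x.snd := by
  rw [Algebra.smul_def]; simp [pbr_C_left]

@[simp] lemma sub_fst (a b : Pois k) : (a - b).fst = a.fst - b.fst := by
  rw [sub_eq_add_neg, sub_eq_add_neg]; simp
@[simp] lemma sub_snd (a b : Pois k) : (a - b).snd = a.snd - b.snd := by
  rw [sub_eq_add_neg, sub_eq_add_neg]; simp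

lemma commutator (u v : Pois k) :
    u * v - v * u = ⟨0, pbr u.fst v.fst - pbr v.fst u.fst⟩ := by
  ext : 1 <;> simp <;> ring

lemma triple_commutator (u v w : Pois k) :
    (u * v - v * u) * w - w * (u * v - v * u) = 0 := by
  rw [commutator u v, commutator ⟨0, _⟩ w]
  ext : 1 <;> simp [pbr_zero_left, pbr_zero_right]

end Pois

section Core
open Finsupp

lemma eq_single_add_single_iff (a b : ℕ) (u : Fin 2 →₀ ℕ) :
    u = Finsupp.single (0 : Fin 2) a + Finsupp.single 1 b ↔ (u 0 = a ∧ u 1 = b) := by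
  constructor
  · rintro rfl
    simp [Finsupp.single_apply]
  · rintro ⟨h0, h1⟩
    ext i
    fin_cases i <;> simp [Finsupp.single_apply, h0, h1]

lemma coords_of_cond {q₁ q₂ : ℕ} {m n : Fin 2 →₀ ℕ}
    (h : m - Finsupp.single (0 : Fin 2) 1 + (n - Finsupp.single 1 1)
        = Finsupp.single (0 : Fin 2) (q₁ - 1) + Finsupp.single 1 (q₂ - 1)) :
    m 0 - 1 + n 0 = q₁ - 1 ∧ m 1 + (n 1 - 1) = q₂ - 1 := by
  rw [eq_single_add_single_iff] at h
  simpa [Finsupp.single_apply] using h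

lemma cond_of_coords {q₁ q₂ : ℕ} {m n : Fin 2 →₀ ℕ}
    (h0 : m 0 - 1 + n 0 = q₁ - 1) (h1 : m 1 + (n 1 - 1) = q₂ - 1) :
    m - Finsupp.single (0 : Fin 2) 1 + (n - Finsupp.single 1 1)
        = Finsupp.single (0 : Fin 2) (q₁ - 1) + Finsupp.single 1 (q₂ - 1) := by
  rw [eq_single_add_single_iff]
  simp [Finsupp.single_apply, h0, h1]

lemma coeff_pbr_sub_pbr (q₁ q₂ : ℕ) (h1 : 2 ≤ q₁) (h2 : 2 ≤ q₂)
    (hq1 : (q₁ : k) = 0) (hq2 : (q₂ : k) = 0)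
    (u v : MvPolynomial (Fin 2) k) :
    coeff (Finsupp.single (0 : Fin 2) (q₁ - 1) + Finsupp.single 1 (q₂ - 1))
      (pbr u v - pbr v u) = 0 := by
  set T : Fin 2 →₀ ℕ := Finsupp.single (0 : Fin 2) (q₁ - 1) + Finsupp.single 1 (q₂ - 1) with hT
  induction v using MvPolynomial.induction_on' with
  | add r s hr hs =>
    have e : pbr u (r + s) - pbr (r + s) u
        = (pbr u r - pbr r u) + (pbr u s - pbr s u) := by
      rw [pbr_add_left, pbr_add_right]; ring
    rw [e, coeff_add, hr, hs, add_zero]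
  | monomial n b =>
    induction u using MvPolynomial.induction_on' with
    | add r s hr hs =>
      have e : pbr (r + s) (monomial n b) - pbr (monomial n b) (r + s)
          = (pbr r (monomial n b) - pbr (monomial n b) r)
            + (pbr s (monomial n b) - pbr (monomial n b) s) := by
        rw [pbr_add_left, pbr_add_right]; ring
      rw [e, coeff_add, hr, hs, add_zero]
    | monomial m a =>
      simp only [pbr, pderiv_monomial, monomial_mul, coeff_sub, coeff_monomial]
      have swap34 : n - Finsupp.single (0 : Fin 2) 1 + (m - Finsupp.single 1 1)
          = m - Finsupp.single 1 1 + (n - Finsupp.single (0:Fin 2) 1) := add_comm _ _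
      have swap4 : n - Finsupp.single (1 : Fin 2) 1 + (m - Finsupp.single 0 1)
          = m - Finsupp.single (0:Fin 2) 1 + (n - Finsupp.single 1 1) := add_comm _ _
      rw [swap34, swap4]
      by_cases hA : m - Finsupp.single (0:Fin 2) 1 + (n - Finsupp.single 1 1) = T
      · by_cases hB : m - Finsupp.single (1:Fin 2) 1 + (n - Finsupp.single 0 1) = T
        · simp only [hA, hB, if_true]
          obtain ⟨hA0, hA1⟩ := coords_of_cond (hA.trans hT)
          obtain ⟨hB0, hB1⟩ := coords_of_cond (m := n) (n := m)
            (by rw [add_comm]; exact hB.trans hT)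
          have hs1 : m 0 + n 0 = q₁ := by omega
          have hs2 : m 1 + n 1 = q₂ := by omega
          have e1 : (m 0 : k) + (n 0 : k) = 0 := by
            have := congrArg (Nat.cast : ℕ → k) hs1; push_cast at this; rw [hq1] at this
            exact this
          have e2 : (m 1 : k) + (n 1 : k) = 0 := by
            have := congrArg (Nat.cast : ℕ → k) hs2; push_cast at this; rw [hq2] at this
            exact this
          linear_combination (2 * a * b * (n 1 : k)) * e1 - (2 * a * b * (n 0 : k)) * e2
        · simp only [hA, hB, if_true, if_false]
          obtain ⟨hA0, hA1⟩ := coords_of_cond (hA.trans hT)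
          have hBc : ¬(n 0 - 1 + m 0 = q₁ - 1 ∧ n 1 + (m 1 - 1) = q₂ - 1) := by
            intro hh
            exact hB (by rw [hT, ← add_comm (n - Finsupp.single (0:Fin 2) 1) (m - Finsupp.single 1 1)]; exact cond_of_coords hh.1 hh.2)
          have hd : m 0 = 0 ∨ n 1 = 0 ∨ m 0 = q₁ ∨ n 1 = q₂ := by omega
          rcases hd with hd | hd | hd | hd
          · simp [hd]
          · simp [hd]
          · have hm : (m 0 : k) = 0 := by rw [hd]; exact hq1
            linear_combination (2 * a * b * (n 1 : k)) * hm
          · have hm : (n 1 : k) = 0 := by rw [hd]; exact hq2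
            linear_combination (2 * a * b * (m 0 : k)) * hm
      · by_cases hB : m - Finsupp.single (1:Fin 2) 1 + (n - Finsupp.single 0 1) = T
        · simp only [hA, hB, if_true, if_false]
          obtain ⟨hB0, hB1⟩ := coords_of_cond (m := n) (n := m)
            (by rw [add_comm]; exact hB.trans hT)
          have hAc : ¬(m 0 - 1 + n 0 = q₁ - 1 ∧ m 1 + (n 1 - 1) = q₂ - 1) := by
            intro hh
            exact hA (by rw [hT]; exact cond_of_coords hh.1 hh.2)
          have hd : m 1 = 0 ∨ n 0 = 0 ∨ m 1 = q₂ ∨ n 0 = q₁ := by omega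
          rcases hd with hd | hd | hd | hd
          · simp [hd]
          · simp [hd]
          · have hm : (m 1 : k) = 0 := by rw [hd]; exact hq2
            linear_combination (-2 * a * b * (n 0 : k)) * hm
          · have hm : (n 0 : k) = 0 := by rw [hd]; exact hq1
            linear_combination (-2 * a * b * (m 1 : k)) * hm
        · simp [hA, hB]

lemma pbr_X_pow (i : Fin 2) (nn : ℕ) :
    pbr ((X i : MvPolynomial (Fin 2) k) ^ nn) (X i) = 0 := by
  rw [pbr, Derivation.leibniz_pow, Derivation.leibniz_pow]
  simp only [smul_eq_mul]
  ring

lemma Pois.X_pow (i : Fin 2) (nn : ℕ) :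
    (⟨X i, 0⟩ : Pois k) ^ nn = ⟨X i ^ nn, 0⟩ := by
  induction nn with
  | zero => ext : 1 <;> simp
  | succ nn ih =>
    rw [pow_succ, ih]
    ext : 1 <;> simp [pbr_X_pow, pow_succ]

/-- The second component as a linear map. -/
def sndHom : Pois k →ₗ[k] MvPolynomial (Fin 2) k where
  toFun := Pois.snd
  map_add' a b := rfl
  map_smul' a u := by simp [smul_eq_C_mul]

@[simp] lemma sndHom_apply (u : Pois k) : sndHom u = u.snd := rfl

end Core
end PoissonModel


open MvPolynomial

/-- **Lemma 4.2.** Let `K` be an infinite field of characteristic `p ≥ 5` and let `B` be the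
relatively free algebra `F₂⁽³⁾ = F₂ / T⁽³⁾(F₂)` with generators `x, y`. If `q₁ = p^{s₁}` and
`q₂ = p^{s₂}` with `s₁, s₂ ≥ 1`, then the special element
`f(q₁, q₂) = [x, y]·x^(q₁-1)·y^(q₂-1)` does not lie in the `K`-linear span of all
commutators, i.e. it is not a T-consequence of the commutator. -/
theorem special_not_in_span_of_commutators
    (K : Type*) [Field K] [Infinite K]
    (p : ℕ) (hp : p.Prime) (hp5 : 5 ≤ p) (hchar : CharP K p)
    (B : Type*) [Ring B] [Algebra K B]
    (π : FreeAlgebra K (Fin 2) →ₐ[K] B) (hsurj : Function.Surjective π)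
    (hker : ∀ f : FreeAlgebra K (Fin 2), π f = 0 ↔ f ∈ Tideal (FreeAlgebra K (Fin 2)) 3)
    (x y : B) (hx : x = π (FreeAlgebra.ι K 0)) (hy : y = π (FreeAlgebra.ι K 1))
    (s₁ s₂ : ℕ) (hs₁ : 1 ≤ s₁) (hs₂ : 1 ≤ s₂) :
    (x * y - y * x) * x ^ (p ^ s₁ - 1) * y ^ (p ^ s₂ - 1) ∉
      Submodule.span K { c : B | ∃ a b : B, a * b - b * a = c } := by
  classical
  intro hmem
  set q₁ := p ^ s₁ with hq₁
  set q₂ := p ^ s₂ with hq₂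
  have hpK : (p : K) = 0 := CharP.cast_eq_zero K p
  have hq1c : ((q₁ : ℕ) : K) = 0 := by
    rw [hq₁]; push_cast; rw [hpK]; exact zero_pow (by omega)
  have hq2c : ((q₂ : ℕ) : K) = 0 := by
    rw [hq₂]; push_cast; rw [hpK]; exact zero_pow (by omega)
  have h2q1 : 2 ≤ q₁ := le_trans hp.two_le (Nat.le_self_pow (by omega) p)
  have h2q2 : 2 ≤ q₂ := le_trans hp.two_le (Nat.le_self_pow (by omega) p)
  rw [Submodule.mem_span_set'] at hmem
  obtain ⟨n, c, g, hsum⟩ := hmem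
  choose aa bb hab using fun i => (g i).2
  choose α hα using fun i => hsurj (aa i)
  choose β hβ using fun i => hsurj (bb i)
  set w : FreeAlgebra K (Fin 2) := ∑ i, c i • (α i * β i - β i * α i) with hw
  set fF : FreeAlgebra K (Fin 2) :=
    (FreeAlgebra.ι K 0 * FreeAlgebra.ι K 1 - FreeAlgebra.ι K 1 * FreeAlgebra.ι K 0)
      * FreeAlgebra.ι K 0 ^ (q₁ - 1) * FreeAlgebra.ι K 1 ^ (q₂ - 1) with hfF
  have hπw : π w = (x * y - y * x) * x ^ (q₁ - 1) * y ^ (q₂ - 1) := by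
    rw [hw, map_sum, ← hsum]
    refine Finset.sum_congr rfl fun i _ => ?_
    rw [map_smul, map_sub, map_mul, map_mul, hα, hβ, hab]
  have hπf : π fF = (x * y - y * x) * x ^ (q₁ - 1) * y ^ (q₂ - 1) := by
    simp only [hfF, map_mul, map_sub, map_pow, ← hx, ← hy]
  have hmemT : fF - w ∈ Tideal (FreeAlgebra K (Fin 2)) 3 :=
    (hker _).mp (by rw [map_sub, hπf, hπw, sub_self])
  set Φ : FreeAlgebra K (Fin 2) →ₐ[K] Pois K :=
    FreeAlgebra.lift K (fun i : Fin 2 => (⟨X i, 0⟩ : Pois K)) with hΦdef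
  have hgen : { z : FreeAlgebra K (Fin 2) |
        ∃ (a : _) (l : List _), l.length + 1 = 3 ∧ rnComm a l = z }
      ⊆ (TwoSidedIdeal.ker Φ : Set _) := by
    rintro z ⟨a, l, hlen, rfl⟩
    rcases l with _ | ⟨b, _ | ⟨d, _ | ⟨e, l⟩⟩⟩ <;> simp only [List.length] at hlen <;>
      try omega
    show rnComm a [b, d] ∈ TwoSidedIdeal.ker Φ
    rw [TwoSidedIdeal.mem_ker]
    show Φ ((a * b - b * a) * d - d * (a * b - b * a)) = 0
    rw [map_sub, map_mul, map_sub, map_mul, map_mul, map_mul, map_sub, map_mul, map_mul]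
    exact Pois.triple_commutator _ _ _
  have hΦT : Φ (fF - w) = 0 := by
    have := TwoSidedIdeal.mem_span_iff.mp hmemT (TwoSidedIdeal.ker Φ) hgen
    rwa [TwoSidedIdeal.mem_ker] at this
  have hΦeq : Φ fF = Φ w := by rwa [map_sub, sub_eq_zero] at hΦT
  set T : Fin 2 →₀ ℕ := Finsupp.single (0 : Fin 2) (q₁ - 1) + Finsupp.single 1 (q₂ - 1)
    with hTdef
  set L : Pois K →ₗ[K] K := (lcoeff K T).comp sndHom with hLdef
  have hLw : L (Φ w) = 0 := by
    rw [hw, map_sum, map_sum]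
    refine Finset.sum_eq_zero fun i _ => ?_
    rw [map_smul, map_smul, map_sub, map_mul, map_mul]
    have h0 : L (Φ (α i) * Φ (β i) - Φ (β i) * Φ (α i)) = 0 := by
      rw [Pois.commutator, hLdef]
      simp only [LinearMap.comp_apply, lcoeff_apply, sndHom_apply]
      rw [hTdef]
      exact coeff_pbr_sub_pbr q₁ q₂ h2q1 h2q2 hq1c hq2c _ _
    rw [h0, smul_zero]
  have hLf : L (Φ fF) = 2 := by
    rw [hfF]
    simp only [map_mul, map_sub, map_pow, FreeAlgebra.lift_ι_apply, hΦdef]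
    rw [Pois.X_pow, Pois.X_pow, Pois.commutator]
    have hprod : ((⟨0, pbr (X 0) (X 1) - pbr (X 1) (X 0)⟩ : Pois K)
          * ⟨X 0 ^ (q₁ - 1), 0⟩) * ⟨X 1 ^ (q₂ - 1), 0⟩
        = ⟨0, (pbr (X 0) (X 1) - pbr (X 1) (X 0)) * X 0 ^ (q₁ - 1) * X 1 ^ (q₂ - 1)⟩ := by
      ext : 1 <;> simp [pbr_zero_left]
    rw [hprod]
    have hpv : (pbr (X 0 : MvPolynomial (Fin 2) K) (X 1) - pbr (X 1) (X 0)) = C 2 := by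
      rw [pbr, pbr, pderiv_X_self, pderiv_X_self,
        pderiv_X_of_ne (show (0 : Fin 2) ≠ 1 by decide),
        pderiv_X_of_ne (show (1 : Fin 2) ≠ 0 by decide)]
      rw [map_ofNat]
      ring
    rw [hpv, hLdef]
    simp only [LinearMap.comp_apply, lcoeff_apply, sndHom_apply]
    rw [mul_assoc, X_pow_eq_monomial, X_pow_eq_monomial, monomial_mul, C_mul_monomial,
      coeff_monomial, if_pos hTdef.symm]
    norm_num
  have h2 : (2 : K) ≠ 0 := by
    intro h
    have hd : p ∣ 2 := (CharP.cast_eq_zero_iff K p 2).mp (by exact_mod_cast h)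
    have := Nat.le_of_dvd (by norm_num) hd
    omega
  rw [hΦeq, hLw] at hLf
  exact h2 hLf.symm
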